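/- arXiv:1308.2748 — 2 statements merged into one kernel-verified Lean document; each statement's English description precedes it below -/
import Mathlib

section
/- Let α be a finite (non-negative) measure on [−T, 0), β ≥ 0, and let y : ℝ → ℝ be measurable with y(t) = 0 for t < 0 and ∫₀^T e^{βt}|y(t)|² dt < ∞. Then ∫₀^T e^{βs} ( ∫_{[−T,0)} |y(s+θ)|² α(dθ) ) ds ≤ α̃ ∫₀^T e^{βt}|y(t)|² dt, where α̃ = ∫_{[−T,0)} e^{−βθ} α(dθ). -/
open MeasureTheory
open scoped ENNReal

/-- Fubini-type delay estimate: with `y ≡ 0` on negative times,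
`∫₀^T e^{βs} ∫_{[-T,0)} |y(s+θ)|² α(dθ) ds ≤ α̃ ∫₀^T e^{βt}|y(t)|² dt`,
where `α̃ = ∫_{[-T,0)} e^{-βθ} α(dθ)`. -/
theorem delay_integral_estimate (T β : ℝ) (hT : 0 < T) (hβ : 0 ≤ β)
    (α : Measure ℝ) [IsFiniteMeasure α]
    (hsupp : α (Set.Ico (-T) 0)ᶜ = 0)
    (y : ℝ → ℝ) (hy : Measurable y) (hy0 : ∀ t < (0 : ℝ), y t = 0)
    (hfin : (∫⁻ t in Set.Ioc 0 T,
        ENNReal.ofReal (Real.exp (β * t) * (y t) ^ 2)) < ⊤) :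
    (∫⁻ s in Set.Ioc 0 T, ENNReal.ofReal (Real.exp (β * s)) *
        ∫⁻ θ in Set.Ico (-T) 0, ENNReal.ofReal ((y (s + θ)) ^ 2) ∂α) ≤
      (∫⁻ θ in Set.Ico (-T) 0, ENNReal.ofReal (Real.exp (-β * θ)) ∂α) *
        ∫⁻ t in Set.Ioc 0 T, ENNReal.ofReal (Real.exp (β * t) * (y t) ^ 2) := by
  set f : ℝ → ℝ≥0∞ := fun t => ENNReal.ofReal (Real.exp (β * t) * (y t) ^ 2) with hfdef
  have hfmeas : Measurable f := by
    apply Measurable.ennreal_ofReal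
    exact ((measurable_const.mul measurable_id).exp.mul (hy.pow_const 2))
  set I : ℝ≥0∞ := ∫⁻ t in Set.Ioc 0 T, f t with hIdef
  -- Step 1: pull the constant into the inner integral
  have step1 : (∫⁻ s in Set.Ioc 0 T, ENNReal.ofReal (Real.exp (β * s)) *
        ∫⁻ θ in Set.Ico (-T) 0, ENNReal.ofReal ((y (s + θ)) ^ 2) ∂α)
      = ∫⁻ s in Set.Ioc 0 T, ∫⁻ θ in Set.Ico (-T) 0,
          ENNReal.ofReal (Real.exp (β * s) * (y (s + θ)) ^ 2) ∂α := by
    refine lintegral_congr fun s => ?_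
    rw [← lintegral_const_mul _ (by
      exact Measurable.ennreal_ofReal ((hy.comp (measurable_const.add measurable_id)).pow_const 2))]
    refine lintegral_congr fun θ => ?_
    rw [← ENNReal.ofReal_mul (Real.exp_pos _).le]
  -- Step 2: swap the integrals
  have huncurry : Measurable (Function.uncurry fun s θ =>
      ENNReal.ofReal (Real.exp (β * s) * (y (s + θ)) ^ 2)) := by
    apply Measurable.ennreal_ofReal
    exact ((measurable_const.mul measurable_fst).exp.mul
      ((hy.comp (measurable_fst.add measurable_snd)).pow_const 2))
  have step2 : (∫⁻ s in Set.Ioc 0 T, ∫⁻ θ in Set.Ico (-T) 0,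
        ENNReal.ofReal (Real.exp (β * s) * (y (s + θ)) ^ 2) ∂α)
      = ∫⁻ θ in Set.Ico (-T) 0, (∫⁻ s in Set.Ioc 0 T,
          ENNReal.ofReal (Real.exp (β * s) * (y (s + θ)) ^ 2)) ∂α := by
    exact lintegral_lintegral_swap (μ := volume.restrict (Set.Ioc 0 T))
      (ν := α.restrict (Set.Ico (-T) 0)) huncurry.aemeasurable
  -- Step 3: pointwise (in θ) estimate
  have key : ∀ θ ∈ Set.Ico (-T) (0 : ℝ),
      (∫⁻ s in Set.Ioc 0 T, ENNReal.ofReal (Real.exp (β * s) * (y (s + θ)) ^ 2))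
        ≤ ENNReal.ofReal (Real.exp (-β * θ)) * I := by
    intro θ hθ
    have h1 : ∀ s : ℝ, ENNReal.ofReal (Real.exp (β * s) * (y (s + θ)) ^ 2)
        = ENNReal.ofReal (Real.exp (-β * θ)) * f (s + θ) := by
      intro s
      rw [hfdef]
      rw [← ENNReal.ofReal_mul (Real.exp_pos _).le, ← mul_assoc, ← Real.exp_add]
      ring_nf
    simp_rw [h1]
    rw [lintegral_const_mul (ENNReal.ofReal (Real.exp (-β * θ)))
      (show Measurable fun s => f (s + θ) from hfmeas.comp (by fun_prop))]
    gcongr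
    -- change of variables: t = s + θ
    set g : ℝ → ℝ≥0∞ := (Set.Ioc θ (T + θ)).indicator f with hgdef
    have hgf : ∀ s ∈ Set.Ioc (0:ℝ) T, f (s + θ) = g (s + θ) := by
      intro s hs
      rw [hgdef, Set.indicator_of_mem]
      constructor <;> [linarith [hs.1]; linarith [hs.2]]
    calc (∫⁻ s in Set.Ioc 0 T, f (s + θ))
        = ∫⁻ s in Set.Ioc 0 T, g (s + θ) := setLIntegral_congr_fun measurableSet_Ioc
            hgf
      _ ≤ ∫⁻ s, g (s + θ) := setLIntegral_le_lintegral _ _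
      _ = ∫⁻ t, g t := by
          exact lintegral_add_right_eq_self g θ
      _ = ∫⁻ t in Set.Ioc θ (T + θ), f t := by
          rw [hgdef, lintegral_indicator measurableSet_Ioc f]
      _ ≤ ∫⁻ t in Set.Ioc θ 0 ∪ Set.Ioc 0 T, f t := by
          refine lintegral_mono_set fun t ht => ?_
          rcases le_or_gt t 0 with h | h
          · exact Or.inl ⟨ht.1, h⟩
          · exact Or.inr ⟨h, ht.2.trans (by linarith [hθ.2])⟩
      _ ≤ (∫⁻ t in Set.Ioc θ 0, f t) + ∫⁻ t in Set.Ioc 0 T, f t :=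
          lintegral_union_le _ _ _
      _ = I := by
          have hz : (∫⁻ t in Set.Ioc θ 0, f t) = 0 := by
            have hEq : ∀ t ∈ Set.Ioo θ (0:ℝ), f t = (fun _ => (0:ℝ≥0∞)) t := by
              intro t ht
              simp [hfdef, hy0 t ht.2]
            calc (∫⁻ t in Set.Ioc θ 0, f t)
                = ∫⁻ t in Set.Ioo θ 0, f t :=
                  (setLIntegral_congr (Ioo_ae_eq_Ioc (a := θ) (b := (0:ℝ)))).symm
              _ = ∫⁻ _ in Set.Ioo θ 0, (0:ℝ≥0∞) :=
                  setLIntegral_congr_fun measurableSet_Ioo hEq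
              _ = 0 := lintegral_zero
          rw [hz, zero_add]
  -- Step 4: combine
  rw [step1, step2]
  calc (∫⁻ θ in Set.Ico (-T) 0, (∫⁻ s in Set.Ioc 0 T,
        ENNReal.ofReal (Real.exp (β * s) * (y (s + θ)) ^ 2)) ∂α)
      ≤ ∫⁻ θ in Set.Ico (-T) 0, ENNReal.ofReal (Real.exp (-β * θ)) * I ∂α := by
        exact lintegral_mono_ae ((ae_restrict_iff' measurableSet_Ico).2 (ae_of_all _ key))
    _ = (∫⁻ θ in Set.Ico (-T) 0, ENNReal.ofReal (Real.exp (-β * θ)) ∂α) * I :=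
        lintegral_mul_const _ (Measurable.ennreal_ofReal
          ((measurable_const.mul measurable_id).exp))
end

section
/- Let α be a finite (non-negative) measure on [−T, 0), β ≥ 0, and let y : ℝ → ℝ be measurable with y(t) = 0 for t < 0 and sup_{0 ≤ t ≤ T} e^{βt}|y(t)|² < ∞. Then ∫₀^T e^{βs} ( ∫_{[−T,0)} |y(s+θ)|² α(dθ) ) ds ≤ T · α̃ · sup_{0 ≤ t ≤ T} e^{βt}|y(t)|², where α̃ = ∫_{[−T,0)} e^{−βθ} α(dθ). -/
open MeasureTheory

/-- Delay estimate via the sup norm: with `y ≡ 0` on negative times and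
`e^{βt}|y(t)|² ≤ M` on `[0, T]`,
`∫₀^T e^{βs} ∫_{[-T,0)} |y(s+θ)|² α(dθ) ds ≤ T · α̃ · M`,
where `α̃ = ∫_{[-T,0)} e^{-βθ} α(dθ)`. -/
theorem delay_integral_sup_estimate (T β : ℝ) (hT : 0 < T) (hβ : 0 ≤ β)
    (α : Measure ℝ) [IsFiniteMeasure α]
    (hsupp : α (Set.Ico (-T) 0)ᶜ = 0)
    (y : ℝ → ℝ) (hy : Measurable y) (hy0 : ∀ t < (0 : ℝ), y t = 0)
    (M : ℝ) (hM : ∀ t ∈ Set.Icc 0 T, Real.exp (β * t) * (y t) ^ 2 ≤ M) :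
    (∫⁻ s in Set.Ioc 0 T, ENNReal.ofReal (Real.exp (β * s)) *
        ∫⁻ θ in Set.Ico (-T) 0, ENNReal.ofReal ((y (s + θ)) ^ 2) ∂α) ≤
      ENNReal.ofReal T *
        (∫⁻ θ in Set.Ico (-T) 0, ENNReal.ofReal (Real.exp (-β * θ)) ∂α) *
        ENNReal.ofReal M := by
  have hM0 : 0 ≤ M := le_trans (by positivity) (hM 0 ⟨le_refl 0, hT.le⟩)
  have key : ∀ s ∈ Set.Ioc 0 T, ∀ θ ∈ Set.Ico (-T) 0,
      Real.exp (β * s) * (y (s + θ)) ^ 2 ≤ Real.exp (-β * θ) * M := by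
    intro s hs θ hθ
    by_cases h : s + θ < 0
    · rw [hy0 _ h]
      have : (0:ℝ) ≤ Real.exp (-β * θ) * M := by positivity
      nlinarith
    · push_neg at h
      have h1 : s + θ ≤ T := by nlinarith [hθ.2, hs.2]
      have hb := hM (s + θ) ⟨h, h1⟩
      have hexp : Real.exp (β * s) = Real.exp (-β * θ) * Real.exp (β * (s + θ)) := by
        rw [← Real.exp_add]; ring_nf
      rw [hexp, mul_assoc]
      exact mul_le_mul_of_nonneg_left hb (Real.exp_pos _).le
  have step1 : ∀ s : ℝ, ENNReal.ofReal (Real.exp (β * s)) *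
      ∫⁻ θ in Set.Ico (-T) 0, ENNReal.ofReal ((y (s + θ)) ^ 2) ∂α
      = ∫⁻ θ in Set.Ico (-T) 0,
          ENNReal.ofReal (Real.exp (β * s) * (y (s + θ)) ^ 2) ∂α := by
    intro s
    rw [← lintegral_const_mul' _ _ ENNReal.ofReal_ne_top]
    congr 1
    ext θ
    rw [ENNReal.ofReal_mul (Real.exp_pos _).le]
  calc (∫⁻ s in Set.Ioc 0 T, ENNReal.ofReal (Real.exp (β * s)) *
        ∫⁻ θ in Set.Ico (-T) 0, ENNReal.ofReal ((y (s + θ)) ^ 2) ∂α)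
      = ∫⁻ s in Set.Ioc 0 T, ∫⁻ θ in Set.Ico (-T) 0,
          ENNReal.ofReal (Real.exp (β * s) * (y (s + θ)) ^ 2) ∂α := by
        simp only [step1]
    _ ≤ ∫⁻ _s in Set.Ioc 0 T,
          (∫⁻ θ in Set.Ico (-T) 0, ENNReal.ofReal (Real.exp (-β * θ)) ∂α) *
            ENNReal.ofReal M := by
        apply setLIntegral_mono measurable_const
        intro s hs
        rw [← lintegral_mul_const' _ _ ENNReal.ofReal_ne_top]
        apply setLIntegral_mono
        · exact ((ENNReal.measurable_ofReal.comp
            (Real.measurable_exp.comp (measurable_const.mul measurable_id))).mul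
            measurable_const)
        · intro θ hθ
          rw [← ENNReal.ofReal_mul (Real.exp_pos _).le]
          exact ENNReal.ofReal_le_ofReal (key s hs θ hθ)
    _ = ENNReal.ofReal T *
          (∫⁻ θ in Set.Ico (-T) 0, ENNReal.ofReal (Real.exp (-β * θ)) ∂α) *
          ENNReal.ofReal M := by
        rw [setLIntegral_const, Real.volume_Ioc, sub_zero]
        ring
end
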